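/- (Easy direction of the edge-decomposition lemma) If an n×n Hermitian matrix M admits a decomposition M = Σ_e M_e into positive semidefinite matrices each supported on a 2×2 principal block, then the comparison matrix M̂ is positive semidefinite. -/

import Mathlib

open Matrix Finset
open scoped ComplexOrder

private lemma qf_expand {n : ℕ} (A : Matrix (Fin n) (Fin n) ℂ) (y : Fin n → ℂ) :
    star y ⬝ᵥ A *ᵥ y = ∑ i, ∑ j, (starRingEnd ℂ) (y i) * (A i j * y j) := by
  simp [dotProduct, mulVec, Finset.mul_sum, Complex.star_def]

private lemma edge_nonneg {n : ℕ} (E : Matrix (Fin n) (Fin n) ℂ) (hE : E.PosSemidef)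
    (a b : Fin n) (hs : ∀ i j, E i j ≠ 0 → (i = a ∨ i = b) ∧ (j = a ∨ j = b))
    (u : Fin n → ℝ) (hu : ∀ i, 0 ≤ u i) :
    0 ≤ ∑ i, ∑ j, (if i = j then (E i i).re * (u i * u i)
        else -(‖E i j‖) * (u i * u j)) := by
  classical
  set w : ℂ := E a b with hw
  set c : ℂ := if a = b ∨ w = 0 then 1 else -((starRingEnd ℂ) w) / (‖w‖ : ℂ) with hcdef
  have hc : (starRingEnd ℂ) c * c = 1 := by
    rw [hcdef]
    split_ifs with h
    · simp
    · push_neg at h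
      have habs : (‖w‖ : ℂ) ≠ 0 := by simpa using h.2
      have hmul : w * (starRingEnd ℂ) w = (‖w‖ : ℂ) * (‖w‖ : ℂ) := by
        rw [Complex.mul_conj, Complex.normSq_eq_norm_sq]; push_cast; ring
      simp only [map_neg, map_div₀, Complex.conj_ofReal, Complex.conj_conj]
      field_simp
      linear_combination hmul
  set φ : Fin n → ℂ := fun i => if i = b then c else 1 with hφdef
  have hφ : ∀ i, (starRingEnd ℂ) (φ i) * (φ i) = 1 := by
    intro i
    by_cases hib : i = b
    · simpa [hφdef, hib] using hc
    · simp [hφdef, hib]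
  set z : Fin n → ℂ := fun i => (u i : ℂ) * φ i with hzdef
  have h0 := hE.dotProduct_mulVec_nonneg z
  have hre : 0 ≤ (star z ⬝ᵥ E *ᵥ z).re := by
    rw [Complex.le_def] at h0
    simpa using h0.1
  rw [qf_expand, Complex.re_sum] at hre
  simp only [Complex.re_sum] at hre
  have hterm : ∀ i j, ((starRingEnd ℂ) (z i) * (E i j * z j)).re =
      (if i = j then (E i i).re * (u i * u i)
        else -(‖E i j‖) * (u i * u j)) := by
    intro i j
    by_cases hij : i = j
    · subst hij
      rw [if_pos rfl]
      have key : (starRingEnd ℂ) (z i) * (E i i * z i)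
          = ((u i * u i : ℝ) : ℂ) * E i i := by
        rw [hzdef]
        simp only [_root_.map_mul, Complex.conj_ofReal]
        push_cast
        calc ((u i : ℂ) * (starRingEnd ℂ) (φ i)) * (E i i * ((u i : ℂ) * φ i))
            = ((u i : ℂ) * (u i : ℂ)) * E i i * ((starRingEnd ℂ) (φ i) * φ i) := by ring
          _ = (u i : ℂ) * (u i : ℂ) * E i i := by rw [hφ]; ring
      rw [key, Complex.re_ofReal_mul]
      ring
    · rw [if_neg hij]
      by_cases hEij : E i j = 0
      · simp [hEij]
      · obtain ⟨hi, hj⟩ := hs i j hEij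
        have hab : a ≠ b := by
          rintro rfl
          rcases hi with rfl | rfl <;> rcases hj with rfl | rfl <;> exact hij rfl
        have hba : E b a = (starRingEnd ℂ) w := by
          rw [hw, ← hE.1.apply b a]
          rfl
        have hwne : w ≠ 0 := by
          rcases hi with rfl | rfl <;> rcases hj with rfl | rfl
          · exact absurd rfl hij
          · exact hEij
          · intro hw0
            apply hEij
            rw [hba, hw0, map_zero]
          · exact absurd rfl hij
        have habs : (‖w‖ : ℂ) ≠ 0 := by
          simpa using hwne
        have hcval : c = -((starRingEnd ℂ) w) / (‖w‖ : ℂ) := by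
          rw [hcdef, if_neg (by tauto)]
        have hmul : w * (starRingEnd ℂ) w = (‖w‖ : ℂ) * (‖w‖ : ℂ) := by
          rw [Complex.mul_conj, Complex.normSq_eq_norm_sq]; push_cast; ring
        have hwc : w * c = -(‖w‖ : ℂ) := by
          rw [hcval, mul_div_assoc', div_eq_iff habs]
          linear_combination -hmul
        have hcbar : (starRingEnd ℂ) c * (starRingEnd ℂ) w = -(‖w‖ : ℂ) := by
          rw [← _root_.map_mul, mul_comm c w, hwc]
          simp
        rcases hi with rfl | rfl <;> rcases hj with rfl | rfl
        · exact absurd rfl hij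
        · -- (i,j) = (a,b)
          have key : (starRingEnd ℂ) (z i) * (E i j * z j)
              = ((-(‖E i j‖) * (u i * u j) : ℝ) : ℂ) := by
            rw [hzdef]
            simp only [_root_.map_mul, Complex.conj_ofReal]
            have hφa : φ i = 1 := by simp [hφdef, hab]
            have hφb : φ j = c := by simp [hφdef]
            rw [hφa, hφb, ← hw]
            push_cast
            calc ((u i : ℂ) * (starRingEnd ℂ) 1) * (w * ((u j : ℂ) * c))
                = ((u i : ℂ) * (u j : ℂ)) * (w * c) := by simp; ring
              _ = -(‖w‖ : ℂ) * ((u i : ℂ) * (u j : ℂ)) := by rw [hwc]; ring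
          rw [key, Complex.ofReal_re]
        · -- (i,j) = (b,a)
          have key : (starRingEnd ℂ) (z i) * (E i j * z j)
              = ((-(‖E i j‖) * (u i * u j) : ℝ) : ℂ) := by
            rw [hzdef]
            simp only [_root_.map_mul, Complex.conj_ofReal]
            have hφa : φ j = 1 := by simp [hφdef, hab]
            have hφb : φ i = c := by simp [hφdef]
            rw [hφa, hφb, hba]
            have habsba : ‖(starRingEnd ℂ) w‖ = ‖w‖ := Complex.norm_conj w
            rw [habsba]
            push_cast
            calc ((u i : ℂ) * (starRingEnd ℂ) c) * ((starRingEnd ℂ) w * ((u j : ℂ) * 1))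
                = ((u i : ℂ) * (u j : ℂ)) * ((starRingEnd ℂ) c * (starRingEnd ℂ) w) := by ring
              _ = -(‖w‖ : ℂ) * ((u i : ℂ) * (u j : ℂ)) := by rw [hcbar]; ring
          rw [key, Complex.ofReal_re]
        · exact absurd rfl hij
  calc (0 : ℝ) ≤ ∑ i, ∑ j, ((starRingEnd ℂ) (z i) * (E i j * z j)).re := hre
    _ = _ := by
        refine Finset.sum_congr rfl fun i _ => Finset.sum_congr rfl fun j _ => hterm i j

/-- The comparison matrix of `M`: same diagonal, off-diagonal entries `-|M i j|`. -/
noncomputable def comparisonMatrix {n : ℕ} (M : Matrix (Fin n) (Fin n) ℂ) :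
    Matrix (Fin n) (Fin n) ℂ :=
  Matrix.of fun i j => if i = j then M i i else -(‖M i j‖ : ℂ)

/-- If a Hermitian matrix `M` is a sum of PSD matrices each supported on a `2 × 2`
principal block, then its comparison matrix is positive semidefinite. -/
theorem comparison_posSemidef_of_edge_decomposition {n : ℕ} {ι : Type*} [Fintype ι]
    (M : Matrix (Fin n) (Fin n) ℂ) (hM : M.IsHermitian)
    (Me : ι → Matrix (Fin n) (Fin n) ℂ)
    (hpsd : ∀ t, (Me t).PosSemidef)
    (hsupp : ∀ t, ∃ a b : Fin n, ∀ i j, Me t i j ≠ 0 → (i = a ∨ i = b) ∧ (j = a ∨ j = b))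
    (hsum : M = ∑ t, Me t) :
    (comparisonMatrix M).PosSemidef := by
  classical
  have hentry : ∀ i j, comparisonMatrix M i j =
      if i = j then M i i else -(‖M i j‖ : ℂ) := fun i j => rfl
  have hherm : (comparisonMatrix M).IsHermitian := by
    ext i j
    simp only [conjTranspose_apply, hentry]
    by_cases hij : i = j
    · subst hij
      simp only [if_pos rfl]
      exact hM.apply i i
    · rw [if_neg (fun h => hij h.symm), if_neg hij]
      have habs2 : ‖M j i‖ = ‖M i j‖ := by
        conv_rhs => rw [← hM.apply i j]
        rw [Complex.star_def, Complex.norm_conj]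
      rw [habs2]
      simp
  refine PosSemidef.of_dotProduct_mulVec_nonneg hherm fun x => ?_
  set u : Fin n → ℝ := fun i => ‖x i‖ with hudef
  set q : ℂ := star x ⬝ᵥ comparisonMatrix M *ᵥ x with hq
  -- imaginary part vanishes
  have hqexp : q = ∑ i, ∑ j, (starRingEnd ℂ) (x i) * (comparisonMatrix M i j * x j) :=
    qf_expand _ _
  have him : q.im = 0 := by
    have hsym : ∀ i j, ((starRingEnd ℂ) (x j) * (comparisonMatrix M j i * x i)).im
        = -(((starRingEnd ℂ) (x i) * (comparisonMatrix M i j * x j)).im) := by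
      intro i j
      have hcc : (starRingEnd ℂ) (x j) * (comparisonMatrix M j i * x i)
          = (starRingEnd ℂ) ((starRingEnd ℂ) (x i) * (comparisonMatrix M i j * x j)) := by
        simp only [_root_.map_mul, Complex.conj_conj]
        have h' : (starRingEnd ℂ) (comparisonMatrix M i j) = comparisonMatrix M j i :=
          hherm.apply j i
        rw [h']
        ring
      rw [hcc, Complex.conj_im]
    have h1 : q.im = ∑ i, ∑ j, ((starRingEnd ℂ) (x i) * (comparisonMatrix M i j * x j)).im := by
      rw [hqexp, Complex.im_sum]
      exact Finset.sum_congr rfl fun i _ => Complex.im_sum _ _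
    have h2 : q.im = -q.im := by
      calc q.im = ∑ i, ∑ j, ((starRingEnd ℂ) (x i) * (comparisonMatrix M i j * x j)).im := h1
        _ = ∑ j, ∑ i, ((starRingEnd ℂ) (x i) * (comparisonMatrix M i j * x j)).im :=
            Finset.sum_comm
        _ = ∑ j, ∑ i, -(((starRingEnd ℂ) (x j) * (comparisonMatrix M j i * x i)).im) := by
            refine Finset.sum_congr rfl fun j _ => Finset.sum_congr rfl fun i _ => ?_
            rw [hsym i j, neg_neg]
        _ = -∑ j, ∑ i, ((starRingEnd ℂ) (x j) * (comparisonMatrix M j i * x i)).im := by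
            simp only [Finset.sum_neg_distrib]
        _ = -q.im := by rw [h1]
    linarith
  -- real part nonneg
  have hre : 0 ≤ q.re := by
    have h1 : q.re = ∑ i, ∑ j, ((starRingEnd ℂ) (x i) * (comparisonMatrix M i j * x j)).re := by
      rw [hqexp, Complex.re_sum]
      exact Finset.sum_congr rfl fun i _ => Complex.re_sum _ _
    have hA : ∀ i j, (if i = j then (M i i).re * (u i * u i)
          else -(‖M i j‖) * (u i * u j))
        ≤ ((starRingEnd ℂ) (x i) * (comparisonMatrix M i j * x j)).re := by
      intro i j
      by_cases hij : i = j
      · subst hij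
        rw [if_pos rfl]
        have hx : (starRingEnd ℂ) (x i) * x i = ((u i * u i : ℝ) : ℂ) := by
          rw [mul_comm, Complex.mul_conj, Complex.normSq_eq_norm_sq, hudef]
          push_cast
          ring
        have hkey : (starRingEnd ℂ) (x i) * (comparisonMatrix M i i * x i)
            = ((u i * u i : ℝ) : ℂ) * M i i := by
          rw [hentry, if_pos rfl, ← hx]
          ring
        rw [hkey, Complex.re_ofReal_mul]
        exact le_of_eq (by ring)
      · rw [if_neg hij]
        have hkey : (starRingEnd ℂ) (x i) * (comparisonMatrix M i j * x j)
            = ((-(‖M i j‖) : ℝ) : ℂ) * ((starRingEnd ℂ) (x i) * x j) := by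
          rw [hentry, if_neg hij]
          push_cast
          ring
        rw [hkey, Complex.re_ofReal_mul]
        have hle : ((starRingEnd ℂ) (x i) * x j).re ≤ u i * u j := by
          calc ((starRingEnd ℂ) (x i) * x j).re ≤ ‖(starRingEnd ℂ) (x i) * x j‖ :=
              Complex.re_le_norm _
            _ = u i * u j := by
              rw [norm_mul, Complex.norm_conj, hudef]
        have hnp : (-(‖M i j‖) : ℝ) ≤ 0 := neg_nonpos.2 (norm_nonneg _)
        calc -(‖M i j‖) * (u i * u j)
            ≤ -(‖M i j‖) * ((starRingEnd ℂ) (x i) * x j).re :=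
            mul_le_mul_of_nonpos_left hle hnp
          _ = _ := rfl
    have hB : ∀ i j, (∑ t, (if i = j then (Me t i i).re * (u i * u i)
          else -(‖Me t i j‖) * (u i * u j)))
        ≤ (if i = j then (M i i).re * (u i * u i)
          else -(‖M i j‖) * (u i * u j)) := by
      intro i j
      have hMij : ∀ a b, M a b = ∑ t, Me t a b := by
        intro a b
        rw [hsum]
        simp [Matrix.sum_apply]
      by_cases hij : i = j
      · subst hij
        simp only [if_pos trivial, ite_self, ↓reduceIte]
        rw [hMij i i, Complex.re_sum, Finset.sum_mul]
      · simp only [if_neg hij]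
        have habsle : ‖M i j‖ ≤ ∑ t, ‖Me t i j‖ := by
          rw [hMij i j]
          exact norm_sum_le _ _
        have hp : 0 ≤ u i * u j := by
          rw [hudef]
          positivity
        calc (∑ t, -(‖Me t i j‖) * (u i * u j))
            = -(∑ t, ‖Me t i j‖) * (u i * u j) := by
              rw [← Finset.sum_mul, ← Finset.sum_neg_distrib]
          _ ≤ -(‖M i j‖) * (u i * u j) :=
              mul_le_mul_of_nonneg_right (neg_le_neg habsle) hp
    have hu : ∀ i, 0 ≤ u i := fun i => by rw [hudef]; exact norm_nonneg _
    calc (0 : ℝ) ≤ ∑ t, ∑ i, ∑ j, (if i = j then (Me t i i).re * (u i * u i)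
            else -(‖Me t i j‖) * (u i * u j)) := by
          refine Finset.sum_nonneg fun t _ => ?_
          obtain ⟨a, b, hab⟩ := hsupp t
          exact edge_nonneg (Me t) (hpsd t) a b hab u hu
      _ = ∑ i, ∑ j, ∑ t, (if i = j then (Me t i i).re * (u i * u i)
            else -(‖Me t i j‖) * (u i * u j)) := by
          rw [Finset.sum_comm]
          exact Finset.sum_congr rfl fun i _ => Finset.sum_comm
      _ ≤ ∑ i, ∑ j, (if i = j then (M i i).re * (u i * u i)
            else -(‖M i j‖) * (u i * u j)) :=
          Finset.sum_le_sum fun i _ => Finset.sum_le_sum fun j _ => hB i j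
      _ ≤ ∑ i, ∑ j, ((starRingEnd ℂ) (x i) * (comparisonMatrix M i j * x j)).re :=
          Finset.sum_le_sum fun i _ => Finset.sum_le_sum fun j _ => hA i j
      _ = q.re := h1.symm
  rw [Complex.le_def]
  constructor
  · simpa using hre
  · simpa using him.symm
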